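/- arXiv:2602.04836 — 5 statements merged into one kernel-verified Lean document; each statement's English description precedes it below -/
import Mathlib

section
/- For the logistic sigmoid σ(t) = e^t/(1+e^t), for any real x ≤ 0, integer k ≥ 1, and real α ≥ 2, the product f(x) = ∏_{i=1}^k σ(x - iα) satisfies f(x) ≥ (1/5)·e^{kx}·exp(-(α/2)·k(k+1)). -/
lemma geom_third (k : ℕ) : ∑ i ∈ Finset.Icc 1 k, ((1:ℝ)/4) ^ i ≤ 1/3 := by
  induction k with
  | zero => simp
  | succ n ih =>
    have h : ∑ i ∈ Finset.Icc 1 n, ((1:ℝ)/4) ^ i ≤ 1/3 * (1 - (1/4)^n) := by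
      clear ih
      induction n with
      | zero => simp
      | succ m ih =>
        rw [Finset.sum_Icc_succ_top (by omega : 1 ≤ m + 1)]
        have := ih
        rw [pow_succ]
        nlinarith [pow_nonneg (by norm_num : (0:ℝ) ≤ 1/4) m]
    rw [Finset.sum_Icc_succ_top (by omega : 1 ≤ n + 1)]
    have hp : (0:ℝ) < (1/4)^(n+1) := by positivity
    have : ((1:ℝ)/4)^(n+1) = (1/4)^n * (1/4) := pow_succ _ _
    nlinarith [pow_nonneg (by norm_num : (0:ℝ) ≤ 1/4) n]

lemma gauss_sum (k : ℕ) : ∑ i ∈ Finset.Icc 1 k, (i:ℝ) = k * (k + 1) / 2 := by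
  induction k with
  | zero => simp
  | succ n ih =>
    rw [Finset.sum_Icc_succ_top (by omega : 1 ≤ n + 1), ih]
    push_cast
    ring

theorem stmt_1 (x α : ℝ) (k : ℕ) (hx : x ≤ 0) (hk : 1 ≤ k) (hα : 2 ≤ α) :
    (1 / 5) * Real.exp (k * x) * Real.exp (-(α / 2) * k * (k + 1))
      ≤ ∏ i ∈ Finset.Icc 1 k, Real.exp (x - i * α) / (1 + Real.exp (x - i * α)) := by
  have hA : (0:ℝ) < Real.exp (k * x) * Real.exp (-(α / 2) * k * (k + 1)) := by positivity
  -- rewrite product of quotients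
  rw [Finset.prod_div_distrib]
  have hnum : ∏ i ∈ Finset.Icc 1 k, Real.exp (x - i * α)
      = Real.exp (k * x) * Real.exp (-(α / 2) * k * (k + 1)) := by
    rw [← Real.exp_sum, ← Real.exp_add]
    congr 1
    rw [Finset.sum_sub_distrib, Finset.sum_const, Nat.card_Icc]
    have := gauss_sum k
    rw [← Finset.sum_mul, this]
    simp only [Nat.add_sub_cancel, nsmul_eq_mul]
    ring
  rw [hnum]
  have hDpos : 0 < ∏ i ∈ Finset.Icc 1 k, (1 + Real.exp (x - i * α)) := by
    apply Finset.prod_pos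
    intro i _
    positivity
  have hD5 : ∏ i ∈ Finset.Icc 1 k, (1 + Real.exp (x - i * α)) ≤ 5 := by
    have h1 : ∏ i ∈ Finset.Icc 1 k, (1 + Real.exp (x - i * α))
        ≤ ∏ i ∈ Finset.Icc 1 k, Real.exp (Real.exp (x - i * α)) := by
      apply Finset.prod_le_prod
      · intro i _; positivity
      · intro i _; linarith [Real.add_one_le_exp (Real.exp (x - i * α))]
    have h2 : ∏ i ∈ Finset.Icc 1 k, Real.exp (Real.exp (x - i * α))
        = Real.exp (∑ i ∈ Finset.Icc 1 k, Real.exp (x - i * α)) := (Real.exp_sum _ _).symm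
    have h3 : ∑ i ∈ Finset.Icc 1 k, Real.exp (x - i * α) ≤ 1/3 := by
      refine le_trans (Finset.sum_le_sum ?_) (geom_third k)
      intro i _
      have he2 : Real.exp (-2 : ℝ) ≤ 1/4 := by
        rw [Real.exp_neg]
        have h4 : (4:ℝ) ≤ Real.exp 2 := by
          have h := Real.exp_one_gt_d9
          have : Real.exp 2 = Real.exp 1 * Real.exp 1 := by
            rw [← Real.exp_add]; norm_num
          nlinarith
        rw [inv_le_comm₀ (Real.exp_pos _) (by norm_num)]
        · norm_num at h4 ⊢; linarith
      calc Real.exp (x - i * α) ≤ Real.exp ((-2 : ℝ) * i) := by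
            apply Real.exp_le_exp.mpr
            have : (2:ℝ) * i ≤ i * α := by
              rcases Nat.eq_zero_or_pos i with h | h
              · simp [h]
              · have : (1:ℝ) ≤ i := by exact_mod_cast h
                nlinarith
            linarith
        _ = (Real.exp (-2:ℝ)) ^ i := by
            rw [← Real.exp_nat_mul]; ring_nf
        _ ≤ (1/4) ^ i := by
            apply pow_le_pow_left₀ (Real.exp_pos _).le he2
    have h4 : Real.exp (1/3 : ℝ) ≤ 5 := by
      have : Real.exp (1/3 : ℝ) ≤ Real.exp 1 := Real.exp_le_exp.mpr (by norm_num)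
      have h := Real.exp_one_lt_d9
      linarith
    calc ∏ i ∈ Finset.Icc 1 k, (1 + Real.exp (x - i * α))
        ≤ Real.exp (∑ i ∈ Finset.Icc 1 k, Real.exp (x - i * α)) := h2 ▸ h1
      _ ≤ Real.exp (1/3) := Real.exp_le_exp.mpr h3
      _ ≤ 5 := h4
  calc (1/5) * Real.exp (↑k * x) * Real.exp (-(α / 2) * ↑k * (↑k + 1))
      = (Real.exp (↑k * x) * Real.exp (-(α / 2) * ↑k * (↑k + 1))) / 5 := by ring
    _ ≤ (Real.exp (↑k * x) * Real.exp (-(α / 2) * ↑k * (↑k + 1)))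
          / ∏ i ∈ Finset.Icc 1 k, (1 + Real.exp (x - i * α)) := by
        apply div_le_div_of_nonneg_left hA.le hDpos hD5
end

section
/- For the logistic sigmoid σ and real α ≥ 2, if x ≥ kα for an integer k ≥ 1, then 1/4 ≤ ∏_{i=1}^k σ(x - iα) ≤ 1. -/
open Finset Real

theorem stmt_2 (x α : ℝ) (k : ℕ) (hk : 1 ≤ k) (hα : 2 ≤ α) (hx : k * α ≤ x) :
    1 / 4 ≤ (∏ i ∈ Finset.Icc 1 k, Real.exp (x - i * α) / (1 + Real.exp (x - i * α)))
      ∧ (∏ i ∈ Finset.Icc 1 k, Real.exp (x - i * α) / (1 + Real.exp (x - i * α))) ≤ 1 := by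
  constructor
  · -- lower bound
    set r : ℝ := Real.exp (-2) with hr
    have hr0 : 0 < r := Real.exp_pos _
    have hr1 : r < 1 := Real.exp_lt_one_iff.mpr (by norm_num)
    -- step 1: each factor ≥ exp(-exp(-(t)))
    have h1 : ∀ i ∈ Finset.Icc 1 k,
        Real.exp (-(Real.exp (-(x - i * α)))) ≤
          Real.exp (x - i * α) / (1 + Real.exp (x - i * α)) := by
      intro i _
      set t := x - i * α with ht
      have h2 : Real.exp t / (1 + Real.exp t) = (1 + Real.exp (-t))⁻¹ := by
        rw [Real.exp_neg]
        have := Real.exp_pos t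
        field_simp
        ring
      rw [h2, Real.exp_neg]
      have hle : 1 + Real.exp (-t) ≤ Real.exp (Real.exp (-t)) := by
        have := Real.add_one_le_exp (Real.exp (-t)); linarith
      exact inv_anti₀ (by positivity) hle
    have hprod1 :
        (∏ i ∈ Finset.Icc 1 k, Real.exp (-(Real.exp (-(x - i * α))))) ≤
          ∏ i ∈ Finset.Icc 1 k, Real.exp (x - i * α) / (1 + Real.exp (x - i * α)) :=
      Finset.prod_le_prod (fun i _ => (Real.exp_pos _).le) h1
    have hprodexp :
        (∏ i ∈ Finset.Icc 1 k, Real.exp (-(Real.exp (-(x - i * α))))) =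
          Real.exp (-(∑ i ∈ Finset.Icc 1 k, Real.exp (-(x - i * α)))) := by
      rw [← Real.exp_sum, Finset.sum_neg_distrib]
    -- step 2: bound the sum
    have hsum1 : ∀ i ∈ Finset.Icc 1 k,
        Real.exp (-(x - i * α)) ≤ r ^ (k - i) := by
      intro i hi
      have hik : i ≤ k := (Finset.mem_Icc.mp hi).2
      have hcast : ((k - i : ℕ) : ℝ) = (k : ℝ) - i := by
        rw [Nat.cast_sub hik]
      rw [hr, ← Real.exp_nat_mul]
      apply Real.exp_le_exp.mpr
      rw [hcast]
      have hi' : (i : ℝ) ≤ k := by exact_mod_cast hik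
      nlinarith [mul_le_mul_of_nonneg_left hα (sub_nonneg.mpr hi')]
    have hsum2 : (∑ i ∈ Finset.Icc 1 k, Real.exp (-(x - i * α))) ≤
        ∑ i ∈ Finset.Icc 1 k, r ^ (k - i) :=
      Finset.sum_le_sum hsum1
    have hreindex : (∑ i ∈ Finset.Icc 1 k, r ^ (k - i)) = ∑ j ∈ Finset.range k, r ^ j := by
      have himg : Finset.Icc 1 k = Finset.image (· + 1) (Finset.range k) := by
        ext i
        simp only [Finset.mem_Icc, Finset.mem_image, Finset.mem_range]
        constructor
        · rintro ⟨h1, h2⟩; exact ⟨i - 1, by omega, by omega⟩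
        · rintro ⟨a, ha, rfl⟩; omega
      rw [himg, Finset.sum_image (by intro a _ b _ h; simp only at h; omega)]
      rw [← Finset.sum_range_reflect]
      apply Finset.sum_congr rfl
      intro j hj
      have hj' : j < k := Finset.mem_range.mp hj
      congr 1
      omega
    have hgeom : (∑ j ∈ Finset.range k, r ^ j) ≤ 1 / (1 - r) := by
      rw [le_div_iff₀ (by linarith)]
      have h := geom_sum_mul r k
      nlinarith [pow_pos hr0 k]
    -- numeric: 1/(1-r) ≤ log 4
    have hnum : 1 / (1 - r) ≤ Real.log 4 := by
      have hlog4 : Real.log 4 = 2 * Real.log 2 := by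
        rw [show (4:ℝ) = 2 ^ 2 by norm_num, Real.log_pow]
        push_cast; ring
      have hlog2 : 0.6931471803 < Real.log 2 := Real.log_two_gt_d9
      have he : 2.7182818283 < Real.exp 1 := Real.exp_one_gt_d9
      have he2 : (7:ℝ) < Real.exp 2 := by
        have : Real.exp 2 = Real.exp 1 * Real.exp 1 := by
          rw [← Real.exp_add]; norm_num
        nlinarith
      have hrv : r < 1 / 7 := by
        rw [hr, Real.exp_neg]
        rw [inv_lt_comm₀ (Real.exp_pos 2) (by norm_num)]
        · linarith
      rw [hlog4, div_le_iff₀ (by linarith)]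
      nlinarith
    -- combine
    calc (1:ℝ)/4 = Real.exp (-(Real.log 4)) := by
          rw [Real.exp_neg, Real.exp_log (by norm_num)]; norm_num
      _ ≤ Real.exp (-(∑ i ∈ Finset.Icc 1 k, Real.exp (-(x - i * α)))) := by
          apply Real.exp_le_exp.mpr
          have : (∑ i ∈ Finset.Icc 1 k, Real.exp (-(x - i * α))) ≤ Real.log 4 := by
            calc _ ≤ ∑ i ∈ Finset.Icc 1 k, r ^ (k - i) := hsum2
              _ = ∑ j ∈ Finset.range k, r ^ j := hreindex
              _ ≤ 1 / (1 - r) := hgeom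
              _ ≤ Real.log 4 := hnum
          linarith
      _ = ∏ i ∈ Finset.Icc 1 k, Real.exp (-(Real.exp (-(x - i * α)))) := hprodexp.symm
      _ ≤ _ := hprod1
  · -- upper bound
    apply Finset.prod_le_one
    · intro i _; positivity
    · intro i _
      have := Real.exp_pos (x - i * α)
      rw [div_le_one (by linarith)]
      linarith
end

section
/- Let σ be the logistic sigmoid, α ≥ 2 real, k ≥ 1 an integer, and j ∈ {0,1,...,k-1}. If x ∈ [jα, (j+1)α], then ∏_{i=1}^k σ(x - iα) ≤ exp(-(α/2)·(k-j-1)(k-j)). -/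
lemma aux_sum_formula (j : ℕ) (α : ℝ) : ∀ k : ℕ, j < k →
    ∑ i ∈ Finset.Icc (j + 1) k, ((j : ℝ) + 1 - i) * α
      = -(α / 2) * ((k : ℝ) - j - 1) * ((k : ℝ) - j) := by
  intro k
  induction k with
  | zero => omega
  | succ m ih =>
    intro hjm
    rcases Nat.lt_or_ge j m with hlt | hge
    · rw [Finset.sum_Icc_succ_top (by omega), ih hlt]
      push_cast; ring
    · have hjm' : j = m := by omega
      subst hjm'
      rw [show j + 1 = j + 1 from rfl]
      rw [Finset.Icc_self, Finset.sum_singleton]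
      push_cast; ring

theorem stmt_3 (x α : ℝ) (k j : ℕ) (hk : 1 ≤ k) (hα : 2 ≤ α) (hj : j < k)
    (hx : x ∈ Set.Icc ((j : ℝ) * α) (((j : ℝ) + 1) * α)) :
    (∏ i ∈ Finset.Icc 1 k, Real.exp (x - i * α) / (1 + Real.exp (x - i * α)))
      ≤ Real.exp (-(α / 2) * ((k : ℝ) - j - 1) * ((k : ℝ) - j)) := by
  obtain ⟨hx1, hx2⟩ := hx
  have hstep1 : ∀ i ∈ Finset.Icc 1 k,
      Real.exp (x - i * α) / (1 + Real.exp (x - i * α)) ≤ Real.exp (min (x - i * α) 0) := by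
    intro i _
    have hp := Real.exp_pos (x - i * α)
    rcases le_total (x - i * α) 0 with h | h
    · rw [min_eq_left h]
      rw [div_le_iff₀ (by positivity)]
      nlinarith [hp]
    · rw [min_eq_right h, Real.exp_zero, div_le_one (by positivity)]
      linarith
  have hsum : ∑ i ∈ Finset.Icc 1 k, min (x - i * α) 0
      ≤ -(α / 2) * ((k : ℝ) - j - 1) * ((k : ℝ) - j) := by
    have hsub : Finset.Icc (j + 1) k ⊆ Finset.Icc 1 k :=
      Finset.Icc_subset_Icc (by omega) le_rfl
    have h3 : ∑ i ∈ Finset.Icc 1 k, min (x - i * α) 0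
        ≤ ∑ i ∈ Finset.Icc (j + 1) k, min (x - i * α) 0 := by
      have := Finset.sum_le_sum_of_subset_of_nonneg
        (f := fun i : ℕ => -min (x - (i : ℝ) * α) 0) hsub
        (fun i _ _ => neg_nonneg.mpr (min_le_right _ 0))
      simp only [Finset.sum_neg_distrib] at this
      linarith
    have h4 : ∑ i ∈ Finset.Icc (j + 1) k, min (x - i * α) 0
        ≤ ∑ i ∈ Finset.Icc (j + 1) k, ((j : ℝ) + 1 - i) * α := by
      apply Finset.sum_le_sum
      intro i hi
      have hi1 : j + 1 ≤ i := (Finset.mem_Icc.mp hi).1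
      have hi1' : (j : ℝ) + 1 ≤ i := by exact_mod_cast hi1
      have : (x - i * α) ≤ ((j : ℝ) + 1 - i) * α := by nlinarith
      exact le_trans (min_le_left _ _) this
    have h5 := aux_sum_formula j α k hj
    linarith
  calc (∏ i ∈ Finset.Icc 1 k, Real.exp (x - i * α) / (1 + Real.exp (x - i * α)))
      ≤ ∏ i ∈ Finset.Icc 1 k, Real.exp (min (x - i * α) 0) :=
        Finset.prod_le_prod (fun i _ => by positivity) hstep1
    _ = Real.exp (∑ i ∈ Finset.Icc 1 k, min (x - i * α) 0) := (Real.exp_sum _ _).symm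
    _ ≤ _ := Real.exp_le_exp.mpr hsum
end

section
/- Let σ be the logistic sigmoid, α ≥ 2 real, k ≥ 1 an integer, and j ∈ {0,1,...,k-1}. If x ∈ [jα, (j+1)α], then ∏_{i=1}^k σ(x - iα) ≥ (1/20)·exp(-(α/2)·(k-j+1)(k-j)). -/
open Finset

-- ∏ (1 - aᵢ) ≥ 1 - Σ aᵢ
private lemma prod_one_sub_ge (s : Finset ℕ) (a : ℕ → ℝ) (h0 : ∀ i ∈ s, 0 ≤ a i)
    (h1 : ∀ i ∈ s, a i ≤ 1) : 1 - ∑ i ∈ s, a i ≤ ∏ i ∈ s, (1 - a i) := by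
  classical
  induction s using Finset.induction_on with
  | empty => simp
  | @insert b s hb ih =>
      rw [Finset.sum_insert hb, Finset.prod_insert hb]
      have hb0 := h0 b (mem_insert_self b s)
      have hb1 := h1 b (mem_insert_self b s)
      have hs0 : (0:ℝ) ≤ ∑ i ∈ s, a i :=
        Finset.sum_nonneg fun i hi => h0 i (mem_insert_of_mem hi)
      have ihs := ih (fun i hi => h0 i (mem_insert_of_mem hi))
        (fun i hi => h1 i (mem_insert_of_mem hi))
      nlinarith [mul_le_mul_of_nonneg_left ihs (by linarith : (0:ℝ) ≤ 1 - a b),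
        mul_nonneg hb0 hs0]

private lemma sum_geom_le (N : ℕ) : ∑ i ∈ Finset.Ioc 0 N, ((1:ℝ)/3)^i ≤ 1/2 - (1/2)*(1/3)^N := by
  induction N with
  | zero => simp
  | succ n ih =>
      rw [Finset.sum_Ioc_succ_top (Nat.zero_le n)]
      have : ((1:ℝ)/3)^(n+1) = (1/3)*(1/3)^n := by ring
      rw [this]; nlinarith [pow_nonneg (by norm_num : (0:ℝ) ≤ 1/3) n]

private lemma rexp2_le : Real.exp (-2) ≤ 1/3 := by
  have h := Real.add_one_le_exp (2:ℝ)
  rw [Real.exp_neg, inv_le_comm₀ (by positivity) (by norm_num)]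
  linarith

private lemma half_prod (s : Finset ℕ) (hs : ∀ i ∈ s, 1 ≤ i) :
    (1:ℝ)/2 ≤ ∏ i ∈ s, (1 - Real.exp (-2)^i) := by
  have hr0 : (0:ℝ) ≤ Real.exp (-2) := (Real.exp_pos _).le
  have hsum : ∑ i ∈ s, Real.exp (-2)^i ≤ 1/2 := by
    set N := s.sup id with hN
    have hsub : s ⊆ Finset.Ioc 0 N := by
      intro i hi
      simp only [Finset.mem_Ioc]
      exact ⟨hs i hi, Finset.le_sup (f := id) hi⟩
    calc ∑ i ∈ s, Real.exp (-2)^i ≤ ∑ i ∈ Finset.Ioc 0 N, Real.exp (-2)^i :=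
          Finset.sum_le_sum_of_subset_of_nonneg hsub (fun i _ _ => by positivity)
      _ ≤ ∑ i ∈ Finset.Ioc 0 N, ((1:ℝ)/3)^i :=
          Finset.sum_le_sum (fun i _ => pow_le_pow_left₀ hr0 rexp2_le i)
      _ ≤ 1/2 - (1/2)*(1/3)^N := sum_geom_le N
      _ ≤ 1/2 := by nlinarith [pow_nonneg (by norm_num : (0:ℝ) ≤ 1/3) N]
  have := prod_one_sub_ge s (fun i => Real.exp (-2)^i)
    (fun i _ => by positivity)
    (fun i _ => by
      have : Real.exp (-2) ≤ 1 := Real.exp_le_one_iff.mpr (by norm_num)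
      exact pow_le_one₀ hr0 this)
  linarith

private lemma half_prod' (s : Finset ℕ) (g : ℕ → ℕ) (hg : ∀ i ∈ s, 1 ≤ g i)
    (hinj : ∀ i ∈ s, ∀ j ∈ s, g i = g j → i = j) :
    (1:ℝ)/2 ≤ ∏ i ∈ s, (1 - Real.exp (-2)^(g i)) := by
  rw [← Finset.prod_image (f := fun p => 1 - Real.exp (-2)^p) hinj]
  exact half_prod _ (by intro p hp; rcases Finset.mem_image.mp hp with ⟨i, hi, rfl⟩; exact hg i hi)

-- sigmoid lower bounds
private lemma sig_one_sub (t : ℝ) : 1 - Real.exp (-t) ≤ Real.exp t / (1 + Real.exp t) := by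
  have h1 : (0:ℝ) < 1 + Real.exp t := by positivity
  rw [le_div_iff₀ h1]
  have h2 : Real.exp (-t) * Real.exp t = 1 := by rw [← Real.exp_add]; simp
  nlinarith [Real.exp_pos (-t)]

private lemma sig_exp_mul (t : ℝ) : Real.exp t * (1 - Real.exp t) ≤ Real.exp t / (1 + Real.exp t) := by
  have h1 : (0:ℝ) < 1 + Real.exp t := by positivity
  rw [le_div_iff₀ h1]
  nlinarith [Real.exp_pos t, mul_nonneg (mul_nonneg (Real.exp_pos t).le (Real.exp_pos t).le) (Real.exp_pos t).le]

private lemma sig_half_exp (t : ℝ) (ht : t ≤ 0) : Real.exp t / 2 ≤ Real.exp t / (1 + Real.exp t) := by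
  have h1 : Real.exp t ≤ 1 := Real.exp_le_one_iff.mpr ht
  have h2 : (0:ℝ) < 1 + Real.exp t := by positivity
  rw [div_le_div_iff₀ (by norm_num) h2]
  nlinarith [Real.exp_pos t]

private lemma sig_half (t : ℝ) (ht : 0 ≤ t) : (1:ℝ)/2 ≤ Real.exp t / (1 + Real.exp t) := by
  have h1 : (0:ℝ) < 1 + Real.exp t := by positivity
  rw [le_div_iff₀ h1]
  have := Real.one_le_exp ht
  linarith

theorem stmt_4 (x α : ℝ) (k j : ℕ) (hk : 1 ≤ k) (hα : 2 ≤ α) (hj : j < k)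
    (hx : x ∈ Set.Icc ((j : ℝ) * α) (((j : ℝ) + 1) * α)) :
    (1 / 20) * Real.exp (-(α / 2) * ((k : ℝ) - j + 1) * ((k : ℝ) - j))
      ≤ ∏ i ∈ Finset.Icc 1 k, Real.exp (x - i * α) / (1 + Real.exp (x - i * α)) := by
  obtain ⟨hx1, hx2⟩ := hx
  set f : ℕ → ℝ := fun i => Real.exp (x - i * α) / (1 + Real.exp (x - i * α)) with hf
  set n : ℕ := k - j with hn
  have hn1 : 1 ≤ n := by omega
  have hnc : ((n:ℝ)) = (k:ℝ) - j := by rw [hn]; push_cast [Nat.cast_sub hj.le]; ring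
  set E : ℝ := Real.exp (-(α / 2) * ((k : ℝ) - j + 1) * ((k : ℝ) - j)) with hE
  have hIcc : Finset.Icc 1 k = Finset.Ioc 0 k := Finset.Icc_add_one_left_eq_Ioc 0 k
  rw [hIcc]
  rw [← Finset.prod_Ioc_consecutive f (Nat.zero_le j) hj.le]
  -- Part A
  have hA : (1:ℝ)/4 ≤ ∏ i ∈ Finset.Ioc 0 j, f i := by
    rcases Nat.eq_zero_or_pos j with hj0 | hjpos
    · subst hj0; simp; norm_num
    · obtain ⟨m, rfl⟩ : ∃ m, j = m + 1 := ⟨j - 1, by omega⟩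
      rw [Finset.prod_Ioc_succ_top (Nat.zero_le m) f]
      have hfj : (1:ℝ)/2 ≤ f (m+1) := by
        apply sig_half
        have : ((m:ℝ)+1) * α ≤ x := by push_cast at hx1 ⊢; linarith
        push_cast; linarith
      have hmid : (1:ℝ)/2 ≤ ∏ i ∈ Finset.Ioc 0 m, f i := by
        have step : ∏ i ∈ Finset.Ioc 0 m, (1 - Real.exp (-2)^(m+1-i)) ≤ ∏ i ∈ Finset.Ioc 0 m, f i := by
          apply Finset.prod_le_prod
          · intro i hi
            have : Real.exp (-2)^(m+1-i) ≤ 1 :=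
              pow_le_one₀ (Real.exp_pos _).le (Real.exp_le_one_iff.mpr (by norm_num))
            linarith
          · intro i hi
            simp only [Finset.mem_Ioc] at hi
            have hcast : ((m+1-i : ℕ) : ℝ) = (m:ℝ) + 1 - i := by
              push_cast [Nat.cast_sub (by omega : i ≤ m+1)]; ring
            have hxiα : 2 * ((m:ℝ) + 1 - i) ≤ x - i * α := by
              have h1 : ((m:ℝ)+1) * α ≤ x := by push_cast at hx1 ⊢; linarith
              have h2 : (0:ℝ) ≤ (m:ℝ) + 1 - i - 1 := by
                have : (i:ℝ) ≤ m := by exact_mod_cast hi.2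
                linarith
              nlinarith
            have hexp : Real.exp (-(x - i*α)) ≤ Real.exp (-2)^(m+1-i) := by
              rw [← Real.exp_nat_mul]
              apply Real.exp_le_exp.mpr
              rw [hcast]; linarith
            calc 1 - Real.exp (-2)^(m+1-i) ≤ 1 - Real.exp (-(x - i*α)) := by linarith
              _ ≤ f i := sig_one_sub _
        have hbase := half_prod' (Finset.Ioc 0 m) (fun i => m+1-i)
          (by intro i hi; simp only [Finset.mem_Ioc] at hi; show 1 ≤ m+1-i; omega)
          (by intro i hi j' hj' h; simp only [Finset.mem_Ioc] at hi hj'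
              have h' : m+1-i = m+1-j' := h
              omega)
        linarith
      calc (1:ℝ)/4 = (1/2) * (1/2) := by norm_num
        _ ≤ (∏ i ∈ Finset.Ioc 0 m, f i) * f (m+1) := by
            apply mul_le_mul hmid hfj (by norm_num) (le_trans (by norm_num) hmid)
  -- Part B
  have hB : (1:ℝ)/4 * E ≤ ∏ i ∈ Finset.Ioc j k, f i := by
    -- reindex to m ∈ Ioc 0 n
    have himg : Finset.image (fun m => j + m) (Finset.Ioc 0 n) = Finset.Ioc j k := by
      ext i
      simp only [Finset.mem_image, Finset.mem_Ioc]
      constructor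
      · rintro ⟨m, hm, rfl⟩; omega
      · intro hi; exact ⟨i - j, by omega, by omega⟩
    have hre : ∏ i ∈ Finset.Ioc j k, f i = ∏ m ∈ Finset.Ioc 0 n, f (j + m) := by
      rw [← himg, Finset.prod_image (by intro a _ b _ h; simp only at h; omega)]
    rw [hre]
    set b : ℕ → ℝ := fun m => Real.exp (-(m:ℝ)*α) *
      (if m = 1 then (1:ℝ)/2 else 1 - Real.exp (-2)^(m-1)) with hb
    have hble : ∀ m ∈ Finset.Ioc 0 n, b m ≤ f (j + m) := by
      intro m hm
      simp only [Finset.mem_Ioc] at hm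
      have hxt1 : -(m:ℝ)*α ≤ x - (j+m) * α := by
        push_cast; nlinarith [hx1]
      have hexp1 : Real.exp (-(m:ℝ)*α) ≤ Real.exp (x - ((j+m : ℕ):ℝ) * α) := by
        apply Real.exp_le_exp.mpr; push_cast at hxt1 ⊢; linarith
      rcases eq_or_ne m 1 with rfl | hm1
      · have hb1 : b 1 = Real.exp (-(1:ℝ)*α) * (1/2) := by simp only [hb]; norm_num
        rw [hb1]
        have ht0 : x - ((j+1 : ℕ):ℝ) * α ≤ 0 := by push_cast; push_cast at hx2; linarith
        calc Real.exp (-(1:ℝ)*α) * (1/2)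
            ≤ Real.exp (x - ((j+1:ℕ):ℝ) * α) * (1/2) := by
              apply mul_le_mul_of_nonneg_right _ (by norm_num)
              apply Real.exp_le_exp.mpr
              push_cast; push_cast at hx1; linarith
          _ = Real.exp (x - ((j+1:ℕ):ℝ) * α) / 2 := by ring
          _ ≤ f (j+1) := sig_half_exp _ ht0
      · have hm2 : 2 ≤ m := by omega
        have hbm : b m = Real.exp (-(m:ℝ)*α) * (1 - Real.exp (-2)^(m-1)) := by
          simp only [hb, if_neg hm1]
        rw [hbm]
        have hcast : ((m-1 : ℕ) : ℝ) = (m:ℝ) - 1 := by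
          push_cast [Nat.cast_sub (by omega : 1 ≤ m)]; ring
        have ht2 : x - ((j+m:ℕ):ℝ) * α ≤ -2 * ((m:ℝ) - 1) := by
          push_cast; push_cast at hx2
          have hm2' : (2:ℝ) ≤ m := by exact_mod_cast hm2
          nlinarith
        have hexp2 : Real.exp (x - ((j+m:ℕ):ℝ) * α) ≤ Real.exp (-2)^(m-1) := by
          rw [← Real.exp_nat_mul]
          apply Real.exp_le_exp.mpr
          rw [hcast]; linarith
        have h01 : Real.exp (-2)^(m-1) ≤ 1 :=
          pow_le_one₀ (Real.exp_pos _).le (Real.exp_le_one_iff.mpr (by norm_num))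
        calc Real.exp (-(m:ℝ)*α) * (1 - Real.exp (-2)^(m-1))
            ≤ Real.exp (x - ((j+m:ℕ):ℝ) * α) * (1 - Real.exp (x - ((j+m:ℕ):ℝ) * α)) := by
              apply mul_le_mul hexp1 (by linarith) (by nlinarith [Real.exp_pos (x - ((j+m:ℕ):ℝ) * α)]) (Real.exp_pos _).le
          _ ≤ f (j+m) := sig_exp_mul _
    have hstep : ∏ m ∈ Finset.Ioc 0 n, b m ≤ ∏ m ∈ Finset.Ioc 0 n, f (j + m) := by
      apply Finset.prod_le_prod
      · intro m hm
        simp only [Finset.mem_Ioc] at hm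
        rcases eq_or_ne m 1 with rfl | hm1
        · have hb1 : b 1 = Real.exp (-(1:ℝ)*α) * (1/2) := by simp only [hb]; norm_num
          rw [hb1]; positivity
        · have hbm : b m = Real.exp (-(m:ℝ)*α) * (1 - Real.exp (-2)^(m-1)) := by
            simp only [hb, if_neg hm1]
          rw [hbm]
          have h01 : Real.exp (-2)^(m-1) ≤ 1 :=
            pow_le_one₀ (Real.exp_pos _).le (Real.exp_le_one_iff.mpr (by norm_num))
          exact mul_nonneg (Real.exp_pos _).le (by linarith)
      · exact hble
    have hprodb : (1:ℝ)/4 * E ≤ ∏ m ∈ Finset.Ioc 0 n, b m := by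
      rw [hb]
      rw [Finset.prod_mul_distrib]
      have hexpprod : ∏ m ∈ Finset.Ioc 0 n, Real.exp (-(m:ℝ)*α) = E := by
        rw [← Real.exp_sum]
        congr 1
        have hsum : ∑ m ∈ Finset.Ioc 0 n, ((m:ℕ):ℝ) = (n:ℝ) * ((n:ℝ)+1) / 2 := by
          induction n with
          | zero => simp
          | succ p ih =>
              rw [Finset.sum_Ioc_succ_top (Nat.zero_le p), ih]
              push_cast; ring
        rw [Finset.sum_congr rfl (fun m _ => by ring : ∀ m ∈ Finset.Ioc 0 n, -(m:ℝ)*α = -α * (m:ℝ))]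
        rw [← Finset.mul_sum, hsum, ← hnc]
        ring
      have hifprod : (1:ℝ)/4 ≤ ∏ m ∈ Finset.Ioc 0 n,
          (if m = 1 then (1:ℝ)/2 else 1 - Real.exp (-2)^(m-1)) := by
        have hsplit : Finset.Ioc 0 n = insert 1 (Finset.Ioc 1 n) := by
          rw [Finset.Ioc_insert_left hn1]; exact (Finset.Icc_add_one_left_eq_Ioc 0 n).symm
        rw [hsplit, Finset.prod_insert (by simp)]
        simp only [if_pos rfl]
        have hrest : (1:ℝ)/2 ≤ ∏ m ∈ Finset.Ioc 1 n,
            (if m = 1 then (1:ℝ)/2 else 1 - Real.exp (-2)^(m-1)) := by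
          have heq : ∏ m ∈ Finset.Ioc 1 n, (if m = 1 then (1:ℝ)/2 else 1 - Real.exp (-2)^(m-1))
              = ∏ m ∈ Finset.Ioc 1 n, (1 - Real.exp (-2)^(m-1)) := by
            apply Finset.prod_congr rfl
            intro m hm
            simp only [Finset.mem_Ioc] at hm
            rw [if_neg (by omega)]
          rw [heq]
          exact half_prod' _ (fun m => m - 1)
            (by intro i hi; simp only [Finset.mem_Ioc] at hi; show 1 ≤ i - 1; omega)
            (by intro i hi j' hj' h; simp only [Finset.mem_Ioc] at hi hj'
                have h' : i - 1 = j' - 1 := h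
                omega)
        calc (1:ℝ)/4 = (1/2)*(1/2) := by norm_num
          _ ≤ _ := mul_le_mul_of_nonneg_left hrest (by norm_num)
      calc (1:ℝ)/4 * E ≤ (∏ m ∈ Finset.Ioc 0 n, (if m = 1 then (1:ℝ)/2 else 1 - Real.exp (-2)^(m-1))) * E := by
            apply mul_le_mul_of_nonneg_right hifprod (le_of_lt (Real.exp_pos _))
        _ = _ := by rw [← hexpprod]; ring
    linarith
  -- combine
  have hE0 : 0 < E := Real.exp_pos _
  calc (1/20) * E ≤ (1/4) * ((1/4) * E) := by nlinarith
    _ ≤ (∏ i ∈ Finset.Ioc 0 j, f i) * ∏ i ∈ Finset.Ioc j k, f i := by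
        apply mul_le_mul hA hB (by positivity) (le_trans (by norm_num) hA)
end

section
/- For any real α ≥ 2 and any integer j ≥ 0, if x ∈ [jα, (j+1)α], then ∏_{i=1}^j σ(x - iα) ≥ 1 - (1/2)·∑_{h=0}^∞ e^{-hα} ≥ 1/4, where σ is the logistic sigmoid. -/
private lemma weier (s : Finset ℕ) (f : ℕ → ℝ) (h0 : ∀ i ∈ s, 0 ≤ f i)
    (h1 : ∀ i ∈ s, f i ≤ 1) :
    1 - ∑ i ∈ s, f i ≤ ∏ i ∈ s, (1 - f i) := by
  induction s using Finset.cons_induction with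
  | empty => simp
  | cons a s ha ih =>
    rw [Finset.prod_cons, Finset.sum_cons]
    have h0a := h0 a (Finset.mem_cons_self a s)
    have h1a := h1 a (Finset.mem_cons_self a s)
    have ih' := ih (fun i hi => h0 i (Finset.mem_cons_of_mem hi))
      (fun i hi => h1 i (Finset.mem_cons_of_mem hi))
    have hs : 0 ≤ ∑ i ∈ s, f i :=
      Finset.sum_nonneg fun i hi => h0 i (Finset.mem_cons_of_mem hi)
    nlinarith [mul_le_mul_of_nonneg_left ih' (by linarith : (0:ℝ) ≤ 1 - f a)]

theorem stmt_5 (x α : ℝ) (j : ℕ) (hα : 2 ≤ α)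
    (hx : x ∈ Set.Icc ((j : ℝ) * α) (((j : ℝ) + 1) * α)) :
    1 - (1 / 2) * (∑' h : ℕ, Real.exp (-(h : ℝ) * α))
      ≤ (∏ i ∈ Finset.Icc 1 j, Real.exp (x - i * α) / (1 + Real.exp (x - i * α)))
    ∧ (1 / 4 : ℝ) ≤ 1 - (1 / 2) * (∑' h : ℕ, Real.exp (-(h : ℝ) * α)) := by
  set q : ℝ := Real.exp (-α) with hq
  have hq0 : 0 < q := Real.exp_pos _
  have hq3 : q ≤ 1/3 := by
    rw [hq, Real.exp_neg, inv_le_comm₀ (Real.exp_pos α) (by norm_num)]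
    have h2 : (3:ℝ) ≤ Real.exp 2 := by nlinarith [Real.add_one_le_exp (2:ℝ)]
    have := Real.exp_le_exp.mpr hα
    norm_num
    linarith
  have hq1 : q < 1 := by linarith
  have htsum : (∑' h : ℕ, Real.exp (-(h : ℝ) * α)) = (1 - q)⁻¹ := by
    have : ∀ h : ℕ, Real.exp (-(h : ℝ) * α) = q ^ h := by
      intro h
      rw [hq, ← Real.exp_nat_mul]
      ring_nf
    simp_rw [this]
    exact tsum_geometric_of_lt_one hq0.le hq1
  rw [htsum]
  constructor
  · -- main inequality
    obtain ⟨hxl, hxr⟩ := hx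
    -- lower bound each factor
    have hfact0 : ∀ i : ℕ, (0:ℝ) ≤ Real.exp (x - i * α) / (1 + Real.exp (x - i * α)) := by
      intro i; positivity
    rcases Nat.eq_zero_or_pos j with hj | hj
    · subst hj
      rw [show Finset.Icc 1 0 = (∅ : Finset ℕ) from by decide, Finset.prod_empty]
      have : (0:ℝ) ≤ (1-q)⁻¹ := inv_nonneg.mpr (by linarith)
      linarith
    · obtain ⟨k, rfl⟩ : ∃ k, j = k + 1 := ⟨j - 1, (Nat.succ_pred_eq_of_pos hj).symm⟩
      rw [Finset.prod_Icc_succ_top (Nat.le_add_left 1 k)]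
      push_cast
      -- bound the top factor by 1/2
      have htop : (1/2 : ℝ) ≤ Real.exp (x - (k+1) * α) / (1 + Real.exp (x - (k+1) * α)) := by
        rw [le_div_iff₀ (by positivity)]
        have h1 : (1:ℝ) ≤ Real.exp (x - (k+1) * α) := by
          rw [Real.one_le_exp_iff]
          push_cast at hxl ⊢
          linarith
        linarith
      -- bound the remaining product
      have hbody : ∀ i ∈ Finset.Icc 1 k,
          1 - q ^ (k + 1 - i) ≤ Real.exp (x - i * α) / (1 + Real.exp (x - i * α)) := by
        intro i hi
        simp only [Finset.mem_Icc] at hi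
        set t : ℝ := x - i * α with ht
        have hE : 0 < Real.exp t := Real.exp_pos t
        have hexp : Real.exp (-t) ≤ q ^ (k + 1 - i) := by
          rw [hq, ← Real.exp_nat_mul, Real.exp_le_exp]
          have hcast : ((k + 1 - i : ℕ) : ℝ) = (k:ℝ) + 1 - i := by
            have : i ≤ k + 1 := le_trans hi.2 (Nat.le_succ k)
            push_cast [this]
            ring
          rw [hcast, ht]
          push_cast at hxl ⊢
          have hiα : (i:ℝ) * α + ((k:ℝ) + 1 - i) * α = ((k:ℝ)+1) * α := by ring
          nlinarith
        rw [le_div_iff₀ (by positivity)]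
        have hEinv : Real.exp (-t) = (Real.exp t)⁻¹ := Real.exp_neg t
        have hprod : Real.exp (-t) * Real.exp t = 1 := by
          rw [← Real.exp_add]; simp
        nlinarith [pow_pos hq0 (k + 1 - i)]
      have hW : 1 - ∑ i ∈ Finset.Icc 1 k, q ^ (k + 1 - i)
          ≤ ∏ i ∈ Finset.Icc 1 k, (1 - q ^ (k + 1 - i)) := by
        apply weier
        · intro i hi; positivity
        · intro i hi
          nlinarith [pow_pos hq0 (k + 1 - i), pow_le_one₀ hq0.le hq1.le (n := k + 1 - i)]
      have hP : 1 - ∑ i ∈ Finset.Icc 1 k, q ^ (k + 1 - i)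
          ≤ ∏ i ∈ Finset.Icc 1 k, Real.exp (x - i * α) / (1 + Real.exp (x - i * α)) := by
        refine le_trans hW (Finset.prod_le_prod ?_ hbody)
        intro i hi
        nlinarith [pow_pos hq0 (k + 1 - i), pow_le_one₀ hq0.le hq1.le (n := k + 1 - i)]
      -- bound the geometric sum
      have hsum : ∑ i ∈ Finset.Icc 1 k, q ^ (k + 1 - i) ≤ q * (1 - q)⁻¹ := by
        have hre : ∑ i ∈ Finset.Icc 1 k, q ^ (k + 1 - i)
            = ∑ i ∈ Finset.Icc 1 k, q ^ i := by
          apply Finset.sum_nbij' (fun i => k + 1 - i) (fun i => k + 1 - i)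
          · intro a ha; simp only [Finset.mem_Icc] at ha ⊢; omega
          · intro a ha; simp only [Finset.mem_Icc] at ha ⊢; omega
          · intro a ha; simp only [Finset.mem_Icc] at ha; omega
          · intro a ha; simp only [Finset.mem_Icc] at ha; omega
          · intro a ha; rfl
        rw [hre]
        have hsub : ∑ i ∈ Finset.Icc 1 k, q ^ i ≤ ∑' i : ℕ, q ^ (i + 1) := by
          have := Summable.sum_le_tsum (f := fun i : ℕ => q ^ (i + 1)) (Finset.range k)
            (fun i _ => by positivity) (by
              apply (summable_geometric_of_lt_one hq0.le hq1).comp_injective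
                (add_left_injective 1))
          refine le_trans (le_of_eq ?_) this
          apply Finset.sum_nbij' (fun i => i - 1) (fun i => i + 1)
          · intro a ha; simp only [Finset.mem_Icc] at ha; simp only [Finset.mem_range]; omega
          · intro a ha; simp only [Finset.mem_range] at ha; simp only [Finset.mem_Icc]; omega
          · intro a ha; simp only [Finset.mem_Icc] at ha; omega
          · intro a ha; omega
          · intro a ha
            simp only [Finset.mem_Icc] at ha
            show q ^ a = q ^ (a - 1 + 1)
            congr 1
            omega
        have htail : ∑' i : ℕ, q ^ (i + 1) = q * (1 - q)⁻¹ := by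
          rw [← tsum_geometric_of_lt_one hq0.le hq1, ← tsum_mul_left]
          congr 1
          ext i
          ring
        linarith [hsub, le_of_eq htail]
      -- combine
      have hB : (0:ℝ) ≤ 1 - q * (1 - q)⁻¹ := by
        rw [sub_nonneg, mul_inv_le_iff₀ (by linarith)]
        linarith
      have hcomb : (1/2 : ℝ) * (1 - q * (1 - q)⁻¹)
          ≤ (∏ i ∈ Finset.Icc 1 k, Real.exp (x - i * α) / (1 + Real.exp (x - i * α)))
            * (Real.exp (x - (k+1) * α) / (1 + Real.exp (x - (k+1) * α))) := by
        have h1 : 1 - q * (1-q)⁻¹ ≤ ∏ i ∈ Finset.Icc 1 k,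
            Real.exp (x - i * α) / (1 + Real.exp (x - i * α)) := by linarith
        have hPnn : (0:ℝ) ≤ ∏ i ∈ Finset.Icc 1 k,
            Real.exp (x - i * α) / (1 + Real.exp (x - i * α)) :=
          Finset.prod_nonneg fun i _ => hfact0 i
        calc (1/2 : ℝ) * (1 - q * (1 - q)⁻¹)
            ≤ (∏ i ∈ Finset.Icc 1 k, Real.exp (x - i * α) / (1 + Real.exp (x - i * α)))
              * (1/2) := by
              rw [mul_comm]
              exact mul_le_mul_of_nonneg_right h1 (by norm_num)
          _ ≤ _ := mul_le_mul_of_nonneg_left htop hPnn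
      refine le_trans ?_ hcomb
      have h1q : (0:ℝ) < 1 - q := by linarith
      have heq : (1:ℝ) - 1/2*(1-q)⁻¹ = 1/2*(1 - q*(1-q)⁻¹) := by
        field_simp
        ring
      linarith
  · -- 1/4 bound
    have h1q : (0:ℝ) < 1 - q := by linarith
    have : (1 - q)⁻¹ ≤ 3/2 := by
      rw [inv_le_comm₀ h1q (by norm_num)]
      norm_num
      linarith
    linarith
end
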